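/- arXiv:2006.16377 — 2 statements merged into one kernel-verified Lean document; each statement's English description precedes it below -/
import Mathlib

section
/- Let P be the transition matrix of an ergodic Markov chain on a finite state space with stationary distribution π (all entries positive). If there exists a reversible ergodic Markov chain Q with stationary distribution σ such that Φ^{1/2}(I−P)Φ^{-1/2} = Σ^{1/2}(I−Q)Σ^{-1/2}, where Φ = diag(π) and Σ = diag(σ), then P is itself reversible (i.e., π_i P_{ij} = π_j P_{ji} for all i, j). -/
open Matrix BigOperators

/-- If the Li–Zhang Laplacian of an ergodic chain `P` equals that of a
reversible ergodic chain `Q`, then `P` is itself reversible. -/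
theorem stmt_0 {n : ℕ} (P Q : Matrix (Fin n) (Fin n) ℝ)
    (π σ : Fin n → ℝ)
    (hPnn : ∀ i j, 0 ≤ P i j) (hProw : ∀ i, ∑ j, P i j = 1)
    (hQnn : ∀ i j, 0 ≤ Q i j) (hQrow : ∀ i, ∑ j, Q i j = 1)
    (hπpos : ∀ i, 0 < π i) (hσpos : ∀ i, 0 < σ i)
    (hπstat : ∀ j, ∑ i, π i * P i j = π j)
    (hσstat : ∀ j, ∑ i, σ i * Q i j = σ j)
    (hPirr : ∀ i j, ∃ k ≥ 1, 0 < (P ^ k) i j)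
    (hQirr : ∀ i j, ∃ k ≥ 1, 0 < (Q ^ k) i j)
    (hQrev : ∀ i j, σ i * Q i j = σ j * Q j i)
    (heq : (Matrix.diagonal fun i => Real.sqrt (π i)) * (1 - P) *
            (Matrix.diagonal fun i => (Real.sqrt (π i))⁻¹)
         = (Matrix.diagonal fun i => Real.sqrt (σ i)) * (1 - Q) *
            (Matrix.diagonal fun i => (Real.sqrt (σ i))⁻¹)) :
    ∀ i j, π i * P i j = π j * P j i := by
  intro i j
  rcases eq_or_ne i j with rfl | hij
  · ring
  -- entrywise consequence of heq at (i,j) and (j,i)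
  have entry : ∀ a b : Fin n, a ≠ b →
      Real.sqrt (π a) * P a b * (Real.sqrt (π b))⁻¹
        = Real.sqrt (σ a) * Q a b * (Real.sqrt (σ b))⁻¹ := by
    intro a b hab
    have h := congrFun (congrFun heq a) b
    simp only [Matrix.mul_diagonal, Matrix.diagonal_mul, Matrix.sub_apply,
      Matrix.one_apply_ne hab] at h
    linear_combination -h
  have e1 := entry i j hij
  have e2 := entry j i (Ne.symm hij)
  set si := Real.sqrt (π i) with hsi
  set sj := Real.sqrt (π j) with hsj
  set ti := Real.sqrt (σ i) with hti
  set tj := Real.sqrt (σ j) with htj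
  have hsi2 : si * si = π i := Real.mul_self_sqrt (hπpos i).le
  have hsj2 : sj * sj = π j := Real.mul_self_sqrt (hπpos j).le
  have hti2 : ti * ti = σ i := Real.mul_self_sqrt (hσpos i).le
  have htj2 : tj * tj = σ j := Real.mul_self_sqrt (hσpos j).le
  have hsip : (0:ℝ) < si := Real.sqrt_pos.mpr (hπpos i)
  have hsjp : (0:ℝ) < sj := Real.sqrt_pos.mpr (hπpos j)
  have htip : (0:ℝ) < ti := Real.sqrt_pos.mpr (hσpos i)
  have htjp : (0:ℝ) < tj := Real.sqrt_pos.mpr (hσpos j)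
  have hrev := hQrev i j
  rw [← hti2, ← htj2] at hrev
  -- clear denominators in e1, e2
  have e1' : si * P i j * tj = ti * Q i j * sj := by
    field_simp at e1
    nlinarith [e1]
  have e2' : sj * P j i * ti = tj * Q j i * si := by
    field_simp at e2
    nlinarith [e2]
  rw [← hsi2, ← hsj2]
  -- π_i P_ij = si² P_ij ; multiply e1' by si*ti etc.
  have key : tj * ti * (si * si * P i j) = tj * ti * (sj * sj * P j i) := by
    calc tj * ti * (si * si * P i j) = (si * P i j * tj) * (si * ti) := by ring
      _ = (ti * Q i j * sj) * (si * ti) := by rw [e1']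
      _ = (ti * ti * Q i j) * (si * sj) := by ring
      _ = (tj * tj * Q j i) * (si * sj) := by rw [hrev]
      _ = (sj * P j i * ti) * (tj * sj) := by rw [e2']; ring
      _ = tj * ti * (sj * sj * P j i) := by ring
  exact mul_left_cancel₀ (ne_of_gt (mul_pos htjp htip)) key
end

section
/- Let H be a hypergraph with edge-INDEPENDENT vertex weights, i.e., γ_e(v) = γ(v) for all hyperedges e containing v. Then the EDVW transition matrix P = D_V^{-1} W D_E^{-1} R satisfies the detailed balance condition with respect to some positive vector, i.e., the resulting random walk is reversible. -/
open Matrix BigOperators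

/-- With edge-INDEPENDENT vertex weights `γ(v)`, the hypergraph random
walk `P = D_V⁻¹ W D_E⁻¹ R` is reversible: it satisfies detailed balance with respect
to some positive vector. -/
theorem stmt_17 {n m : ℕ} (mem : Fin m → Fin n → Bool)
    (γ : Fin n → ℝ) (ω : Fin m → ℝ)
    (hγ : ∀ v, 0 < γ v) (hω : ∀ e, 0 < ω e)
    (hNoEmpty : ∀ e, ∃ v, mem e v) (hNoIso : ∀ v, ∃ e, mem e v)
    (hconn : ∀ u v : Fin n,
      Relation.ReflTransGen (fun a b => ∃ e, mem e a ∧ mem e b) u v)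
    (R : Matrix (Fin m) (Fin n) ℝ) (W : Matrix (Fin n) (Fin m) ℝ)
    (hR : R = Matrix.of fun e v => if mem e v then γ v else 0)
    (hW : W = Matrix.of fun v e => if mem e v then ω e else 0)
    (dV : Fin n → ℝ) (dE : Fin m → ℝ)
    (hdV : dV = fun v => ∑ e, W v e) (hdE : dE = fun e => ∑ v, R e v)
    (P : Matrix (Fin n) (Fin n) ℝ)
    (hP : P = (Matrix.diagonal dV)⁻¹ * W * (Matrix.diagonal dE)⁻¹ * R) :
    ∃ σ : Fin n → ℝ, (∀ v, 0 < σ v) ∧ ∀ i j, σ i * P i j = σ j * P j i := by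
  have hdVpos : ∀ v, 0 < dV v := by
    intro v
    obtain ⟨e, he⟩ := hNoIso v
    have : ∀ e', (0:ℝ) ≤ W v e' := by
      intro e'; rw [hW]; simp only [Matrix.of_apply]; split
      · exact (hω e').le
      · exact le_rfl
    rw [hdV]
    show 0 < ∑ e', W v e'
    refine Finset.sum_pos' (fun e' _ => this e') ⟨e, Finset.mem_univ e, ?_⟩
    rw [hW]; simp [he, hω e]
  have hdEpos : ∀ e, 0 < dE e := by
    intro e
    obtain ⟨v, hv⟩ := hNoEmpty e
    have : ∀ v', (0:ℝ) ≤ R e v' := by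
      intro v'; rw [hR]; simp only [Matrix.of_apply]; split
      · exact (hγ v').le
      · exact le_rfl
    rw [hdE]
    show 0 < ∑ v', R e v'
    refine Finset.sum_pos' (fun v' _ => this v') ⟨v, Finset.mem_univ v, ?_⟩
    rw [hR]; simp [hv, hγ v]
  have hP' : ∀ i j, P i j = (dV i)⁻¹ * ∑ e, W i e * (dE e)⁻¹ * R e j := by
    have h1 : (Matrix.diagonal dV)⁻¹ = Matrix.diagonal (fun v => (dV v)⁻¹) := by
      apply Matrix.inv_eq_right_inv
      rw [Matrix.diagonal_mul_diagonal]
      convert Matrix.diagonal_one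
      exact mul_inv_cancel₀ (hdVpos _).ne'
    have h2 : (Matrix.diagonal dE)⁻¹ = Matrix.diagonal (fun e => (dE e)⁻¹) := by
      apply Matrix.inv_eq_right_inv
      rw [Matrix.diagonal_mul_diagonal]
      convert Matrix.diagonal_one
      exact mul_inv_cancel₀ (hdEpos _).ne'
    intro i j
    rw [hP, h1, h2, Matrix.mul_apply, Finset.mul_sum]
    refine Finset.sum_congr rfl fun e _ => ?_
    rw [Matrix.mul_diagonal, Matrix.diagonal_mul]
    ring
  refine ⟨fun v => γ v * dV v, fun v => mul_pos (hγ v) (hdVpos v), fun i j => ?_⟩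
  rw [hP' i j, hP' j i]
  rw [show γ i * dV i * ((dV i)⁻¹ * ∑ e, W i e * (dE e)⁻¹ * R e j)
      = γ i * (dV i * (dV i)⁻¹) * ∑ e, W i e * (dE e)⁻¹ * R e j by ring,
    show γ j * dV j * ((dV j)⁻¹ * ∑ e, W j e * (dE e)⁻¹ * R e i)
      = γ j * (dV j * (dV j)⁻¹) * ∑ e, W j e * (dE e)⁻¹ * R e i by ring,
    mul_inv_cancel₀ (hdVpos i).ne', mul_inv_cancel₀ (hdVpos j).ne',
    mul_one, mul_one, Finset.mul_sum, Finset.mul_sum]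
  refine Finset.sum_congr rfl fun e _ => ?_
  rw [hR, hW]
  simp only [Matrix.of_apply]
  by_cases hi : mem e i <;> by_cases hj : mem e j <;> simp [hi, hj] <;> ring
end
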